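/- Let B be a nonunitary k-algebra with k-basis X, and let Ш⁰(B) be the free k-module on the set 𝔛_∞ of Rota-Baxter words, equipped with the product ⋄ defined recursively (concatenation when tail and head types differ; B-multiplication on X·X; and ⌊x̄⌋⋄⌊x̄'⌋ = ⌊⌊x̄⌋⋄x̄'⌋ + ⌊x̄⋄⌊x̄'⌋⌋ + λ⌊x̄⋄x̄'⌋). Then (Ш⁰(B), ⋄) is an associative (nonunitary) k-algebra. -/

import Mathlib

/-! Rota-Baxter words over an alphabet `X`, with two bracket symbols. The
alphabet is `X ⊕ Bool`, where `Sum.inr false` is the opening bracket `⌊` and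
`Sum.inr true` is the closing bracket `⌋`. Words are lists; sets of words are
combined by concatenation. -/

/-- The opening bracket `⌊`. -/
def lb {X : Type*} : X ⊕ Bool := Sum.inr false

/-- The closing bracket `⌋`. -/
def rb {X : Type*} : X ⊕ Bool := Sum.inr true

/-- The one-letter word given by `x ∈ X`. -/
def letter {X : Type*} (x : X) : List (X ⊕ Bool) := [Sum.inl x]

/-- The bracketed word `⌊w⌋`. -/
def bracket {X : Type*} (w : List (X ⊕ Bool)) : List (X ⊕ Bool) := lb :: (w ++ [rb])

/-- Concatenation of two sets of words. -/
def catS {X : Type*} (Y Z : Set (List (X ⊕ Bool))) : Set (List (X ⊕ Bool)) :=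
  {w | ∃ y ∈ Y, ∃ z ∈ Z, w = y ++ z}

/-- The set `⌊Z⌋`. -/
def brS {X : Type*} (Z : Set (List (X ⊕ Bool))) : Set (List (X ⊕ Bool)) := bracket '' Z

/-- `powS Y n` is the `(n+1)`-fold concatenation power `Y^{n+1}`. -/
def powS {X : Type*} (Y : Set (List (X ⊕ Bool))) : ℕ → Set (List (X ⊕ Bool))
  | 0 => Y
  | n + 1 => catS Y (powS Y n)

/-- The set of one-letter words, identified with `X`. -/
def lettersS (X : Type*) : Set (List (X ⊕ Bool)) := Set.range letter

/-- The alternating product `Λ(Y, Z)`: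
`(⋃_{r≥1} (Y⌊Z⌋)^r) ∪ (⋃_{r≥0} (Y⌊Z⌋)^r Y) ∪ (⋃_{r≥1} (⌊Z⌋Y)^r) ∪ (⋃_{r≥0} (⌊Z⌋Y)^r ⌊Z⌋)`. -/
def altS {X : Type*} (Y Z : Set (List (X ⊕ Bool))) : Set (List (X ⊕ Bool)) :=
  (⋃ n, powS (catS Y (brS Z)) n) ∪ (Y ∪ ⋃ n, catS (powS (catS Y (brS Z)) n) Y) ∪
  (⋃ n, powS (catS (brS Z) Y) n) ∪ (brS Z ∪ ⋃ n, catS (powS (catS (brS Z) Y) n) (brS Z))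

/-- `𝔛₀ = X`, `𝔛_{n+1} = Λ(X, 𝔛_n)`. -/
def frakX (X : Type*) : ℕ → Set (List (X ⊕ Bool))
  | 0 => lettersS X
  | n + 1 => altS (lettersS X) (frakX X n)

/-- `𝔛_∞ = ⋃_n 𝔛_n`, the set of Rota-Baxter words over `X`. -/
def frakXinf (X : Type*) : Set (List (X ⊕ Bool)) := ⋃ n, frakX X n

/-! The free `k`-module on words, basis elements, and the structural linear
maps (bracketing and one-sided concatenation), together with the head/tail
type of a Rota-Baxter word. -/

/-- The basis element of the free `k`-module on words given by the word `w`. -/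
noncomputable def sw {X : Type*} (k : Type*) [CommRing k] (w : List (X ⊕ Bool)) :
    List (X ⊕ Bool) →₀ k := Finsupp.single w 1

/-- The linear operator `R_B` sending (the basis element of) a word `w` to `⌊w⌋`. -/
noncomputable def brL {X : Type*} (k : Type*) [CommRing k] :
    (List (X ⊕ Bool) →₀ k) →ₗ[k] (List (X ⊕ Bool) →₀ k) :=
  Finsupp.lmapDomain k k bracket

/-- Left concatenation by a fixed word `p`, as a linear map. -/
noncomputable def lcat {X : Type*} (k : Type*) [CommRing k] (p : List (X ⊕ Bool)) :
    (List (X ⊕ Bool) →₀ k) →ₗ[k] (List (X ⊕ Bool) →₀ k) :=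
  Finsupp.lmapDomain k k (fun w => p ++ w)

/-- Right concatenation by a fixed word `p`, as a linear map. -/
noncomputable def rcat {X : Type*} (k : Type*) [CommRing k] (p : List (X ⊕ Bool)) :
    (List (X ⊕ Bool) →₀ k) →ₗ[k] (List (X ⊕ Bool) →₀ k) :=
  Finsupp.lmapDomain k k (fun w => w ++ p)

/-- A word has head type `1` iff it starts with the opening bracket `⌊`. -/
def startsBr {X : Type*} (w : List (X ⊕ Bool)) : Prop := w.head? = some lb

/-- A word has tail type `1` iff it ends with the closing bracket `⌋`. -/
def endsBr {X : Type*} (w : List (X ⊕ Bool)) : Prop := w.getLast? = some rb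

/-- The tail type of `u` differs from the head type of `v`: `t(u) ≠ h(v)`. -/
def typeMismatch {X : Type*} (u v : List (X ⊕ Bool)) : Prop :=
  ¬ (endsBr u ↔ startsBr v)

/-! Auxiliary development. -/

section RBWords

variable {X : Type*}

/-- Inductive characterization of Rota-Baxter words, with head type `h` and
tail type `t` (`true` = bracket, `false` = letter). -/
inductive RBW : Bool → Bool → List (X ⊕ Bool) → Prop
  | letter (x : X) : RBW false false [Sum.inl x]
  | bracket {u : List (X ⊕ Bool)} {h t : Bool} :
      RBW h t u → RBW true true (bracket u)
  | consL (x : X) {t : Bool} {v : List (X ⊕ Bool)} :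
      RBW true t v → RBW false t (Sum.inl x :: v)
  | consB {u : List (X ⊕ Bool)} {h t t' : Bool} {v : List (X ⊕ Bool)} :
      RBW h t u → RBW false t' v → RBW true t' (bracket u ++ v)

lemma RBW.ne_nil {h t : Bool} {w : List (X ⊕ Bool)} (hw : RBW h t w) : w ≠ [] := by
  cases hw <;> simp [_root_.bracket]

lemma RBW.head?_eq {h t : Bool} {w : List (X ⊕ Bool)} (hw : RBW h t w) :
    if h then w.head? = some lb else ∃ x : X, w.head? = some (Sum.inl x) := by
  cases hw <;> simp [_root_.bracket, lb]

lemma RBW.startsBr_iff {h t : Bool} {w : List (X ⊕ Bool)} (hw : RBW h t w) :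
    startsBr w ↔ h = true := by
  have := hw.head?_eq
  cases h with
  | true => simp only [if_true] at this; simp [startsBr, this]
  | false =>
      obtain ⟨x, hx⟩ := this
      simp [startsBr, hx, lb]

lemma RBW.getLast?_eq {h t : Bool} {w : List (X ⊕ Bool)} (hw : RBW h t w) :
    if t then w.getLast? = some rb else ∃ x : X, w.getLast? = some (Sum.inl x) := by
  induction hw with
  | letter x => simp
  | @bracket u h t hu ih =>
      rw [show (_root_.bracket u : List (X ⊕ Bool)) = (lb :: u) ++ [rb] by
        simp [_root_.bracket], List.getLast?_concat]
      simp
  | @consL x t v hv ih =>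
      have hne : v ≠ [] := hv.ne_nil
      rw [show (Sum.inl x :: v : List (X ⊕ Bool)) = [Sum.inl x] ++ v by simp]
      rw [List.getLast?_append_of_ne_nil _ hne] at *
      exact ih
  | @consB u h t t' v hu hv ihu ihv =>
      have hne : v ≠ [] := hv.ne_nil
      rw [List.getLast?_append_of_ne_nil _ hne]
      exact ihv

lemma RBW.endsBr_iff {h t : Bool} {w : List (X ⊕ Bool)} (hw : RBW h t w) :
    endsBr w ↔ t = true := by
  have := hw.getLast?_eq
  cases t with
  | true => simp only [if_true] at this; simp [endsBr, this]
  | false =>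
      obtain ⟨x, hx⟩ := this
      simp [endsBr, hx, rb]

lemma RBW.mismatch_iff {hu tu hv tv : Bool} {u v : List (X ⊕ Bool)}
    (h1 : RBW hu tu u) (h2 : RBW hv tv v) :
    typeMismatch u v ↔ tu ≠ hv := by
  unfold typeMismatch
  rw [h1.endsBr_iff, h2.startsBr_iff]
  cases tu <;> cases hv <;> simp

lemma RBW.append {h t h' t' : Bool} {u v : List (X ⊕ Bool)}
    (hu : RBW h t u) (hv : RBW h' t' v) (hm : t ≠ h') :
    RBW h t' (u ++ v) := by
  induction hu with
  | letter x =>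
      have : h' = true := by cases h' <;> simp_all
      subst this
      exact RBW.consL x hv
  | @bracket u0 h0 t0 hu0 =>
      have : h' = false := by cases h' <;> simp_all
      subst this
      exact RBW.consB hu0 hv
  | @consL x t0 v0 hv0 ih =>
      exact RBW.consL x (ih hm)
  | @consB u0 h0 t0 t0' v0 hu0 hv0 ihu ihv =>
      rw [List.append_assoc]
      exact RBW.consB hu0 (ihv hm)

end RBWords

section Sets

variable {X : Type*}

lemma catS_assoc (A B C : Set (List (X ⊕ Bool))) :
    catS (catS A B) C = catS A (catS B C) := by
  ext w
  constructor
  · rintro ⟨ab, ⟨a, ha, b, hb, rfl⟩, c, hc, rfl⟩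
    exact ⟨a, ha, b ++ c, ⟨b, hb, c, hc, rfl⟩, by simp⟩
  · rintro ⟨a, ha, bc, ⟨b, hb, c, hc, rfl⟩, rfl⟩
    exact ⟨a ++ b, ⟨a, ha, b, hb, rfl⟩, c, hc, by simp⟩

lemma catS_mono {A A' B B' : Set (List (X ⊕ Bool))} (hA : A ⊆ A') (hB : B ⊆ B') :
    catS A B ⊆ catS A' B' := by
  rintro w ⟨a, ha, b, hb, rfl⟩
  exact ⟨a, hA ha, b, hB hb, rfl⟩

lemma brS_mono {A A' : Set (List (X ⊕ Bool))} (hA : A ⊆ A') : brS A ⊆ brS A' :=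
  Set.image_mono hA

lemma powS_mono {A A' : Set (List (X ⊕ Bool))} (hA : A ⊆ A') (n : ℕ) :
    powS A n ⊆ powS A' n := by
  induction n with
  | zero => exact hA
  | succ n ih => exact catS_mono hA ih

lemma powS_succ_right (A : Set (List (X ⊕ Bool))) (n : ℕ) :
    catS (powS A n) A = powS A (n + 1) := by
  induction n with
  | zero => rfl
  | succ n ih =>
      show catS (catS A (powS A n)) A = catS A (powS A (n+1))
      rw [catS_assoc, ih]

/-- The swap lemma: `A (BA)^r = (AB)^r A`. -/
lemma catS_powS_swap (A B : Set (List (X ⊕ Bool))) (r : ℕ) :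
    catS A (powS (catS B A) r) = catS (powS (catS A B) r) A := by
  induction r with
  | zero => show catS A (catS B A) = catS (catS A B) A; rw [catS_assoc]
  | succ r ih =>
      show catS A (catS (catS B A) (powS (catS B A) r)) = catS (catS (catS A B) (powS (catS A B) r)) A
      rw [← catS_assoc, ← catS_assoc A B A, catS_assoc (catS A B) A, ih, ← catS_assoc]

lemma altS_mono {Y Z Z' : Set (List (X ⊕ Bool))} (hZ : Z ⊆ Z') :
    altS Y Z ⊆ altS Y Z' := by
  have h1 : ∀ n, powS (catS Y (brS Z)) n ⊆ powS (catS Y (brS Z')) n :=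
    fun n => powS_mono (catS_mono subset_rfl (brS_mono hZ)) n
  have h2 : ∀ n, powS (catS (brS Z) Y) n ⊆ powS (catS (brS Z') Y) n :=
    fun n => powS_mono (catS_mono (brS_mono hZ) subset_rfl) n
  unfold altS
  apply Set.union_subset_union
  apply Set.union_subset_union
  apply Set.union_subset_union
  · exact Set.iUnion_mono h1
  · exact Set.union_subset_union subset_rfl
      (Set.iUnion_mono fun n => catS_mono (h1 n) subset_rfl)
  · exact Set.iUnion_mono h2
  · exact Set.union_subset_union (brS_mono hZ)
      (Set.iUnion_mono fun n => catS_mono (h2 n) (brS_mono hZ))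

lemma lettersS_subset_altS (Y Z : Set (List (X ⊕ Bool))) : Y ⊆ altS Y Z :=
  fun _ h => Or.inl (Or.inl (Or.inr (Or.inl h)))

lemma brS_subset_altS (Y Z : Set (List (X ⊕ Bool))) : brS Z ⊆ altS Y Z :=
  fun _ h => Or.inr (Or.inl h)

lemma frakX_mono (X : Type*) : ∀ n, frakX X n ⊆ frakX X (n + 1) := by
  intro n
  induction n with
  | zero => exact lettersS_subset_altS _ _
  | succ n ih => exact altS_mono ih

lemma frakX_le (X : Type*) {m n : ℕ} (h : m ≤ n) : frakX X m ⊆ frakX X n := by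
  induction h with
  | refl => exact fun _ h => h
  | step _ ih => exact fun w hw => frakX_mono X _ (ih hw)

end Sets

section Equiv

variable {X : Type*}

/-- The set of Rota-Baxter words of head type `h` and tail type `t`. -/
def Rset (X : Type*) (h t : Bool) : Set (List (X ⊕ Bool)) := {w | RBW h t w}

/-- The set of all Rota-Baxter words. -/
def RAll (X : Type*) : Set (List (X ⊕ Bool)) := {w | ∃ h t, RBW h t w}

lemma Rset_subset_RAll (h t : Bool) : Rset X h t ⊆ RAll X := fun _ hw => ⟨h, t, hw⟩

lemma catS_Rset {A B : Set (List (X ⊕ Bool))} {h t h' t' : Bool}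
    (hA : A ⊆ Rset X h t) (hB : B ⊆ Rset X h' t') (hm : t ≠ h') :
    catS A B ⊆ Rset X h t' := by
  rintro w ⟨a, ha, b, hb, rfl⟩
  exact (hA ha).append (hB hb) hm

lemma powS_Rset {A : Set (List (X ⊕ Bool))} {h t : Bool}
    (hA : A ⊆ Rset X h t) (hm : t ≠ h) (n : ℕ) :
    powS A n ⊆ Rset X h t := by
  induction n with
  | zero => exact hA
  | succ n ih => exact catS_Rset hA ih hm

lemma lettersS_Rset : lettersS X ⊆ Rset X false false := by
  rintro w ⟨x, rfl⟩
  exact RBW.letter x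

lemma brS_Rset {Z : Set (List (X ⊕ Bool))} (hZ : Z ⊆ RAll X) :
    brS Z ⊆ Rset X true true := by
  rintro w ⟨z, hz, rfl⟩
  obtain ⟨h, t, hzr⟩ := hZ hz
  exact hzr.bracket

lemma altS_subset_RAll {Z : Set (List (X ⊕ Bool))} (hZ : Z ⊆ RAll X) :
    altS (lettersS X) Z ⊆ RAll X := by
  have hY : lettersS X ⊆ Rset X false false := lettersS_Rset
  have hbr : brS Z ⊆ Rset X true true := brS_Rset hZ
  have h1 : ∀ n, powS (catS (lettersS X) (brS Z)) n ⊆ Rset X false true :=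
    powS_Rset (catS_Rset hY hbr (by simp)) (by simp)
  have h2 : ∀ n, powS (catS (brS Z) (lettersS X)) n ⊆ Rset X true false :=
    powS_Rset (catS_Rset hbr hY (by simp)) (by simp)
  unfold altS
  apply Set.union_subset
  apply Set.union_subset
  apply Set.union_subset
  · exact (Set.iUnion_subset fun n => (h1 n).trans (Rset_subset_RAll _ _))
  · apply Set.union_subset
    · exact hY.trans (Rset_subset_RAll _ _)
    · exact Set.iUnion_subset fun n =>
        (catS_Rset (h1 n) hY (by simp)).trans (Rset_subset_RAll _ _)
  · exact Set.iUnion_subset fun n => (h2 n).trans (Rset_subset_RAll _ _)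
  · apply Set.union_subset
    · exact hbr.trans (Rset_subset_RAll _ _)
    · exact Set.iUnion_subset fun n =>
        (catS_Rset (h2 n) hbr (by simp)).trans (Rset_subset_RAll _ _)

lemma frakX_subset_RAll : ∀ n, frakX X n ⊆ RAll X := by
  intro n
  induction n with
  | zero => exact lettersS_Rset.trans (Rset_subset_RAll _ _)
  | succ n ih => exact altS_subset_RAll ih

lemma frakXinf_subset_RAll : frakXinf X ⊆ RAll X :=
  Set.iUnion_subset frakX_subset_RAll

end Equiv

section Closure

variable {X : Type*}

lemma letter_mem_lettersS (x : X) : letter x ∈ lettersS X := ⟨x, rfl⟩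

lemma mem_catS {A B : Set (List (X ⊕ Bool))} {a b : List (X ⊕ Bool)}
    (ha : a ∈ A) (hb : b ∈ B) : a ++ b ∈ catS A B := ⟨a, ha, b, hb, rfl⟩

/-- Prepending a letter to an `altS` element starting with a bracket. -/
lemma prepend_letter_altS {Z : Set (List (X ⊕ Bool))} (hZ : Z ⊆ RAll X)
    {v : List (X ⊕ Bool)} (hv : v ∈ altS (lettersS X) Z) {t : Bool}
    (hvt : RBW true t v) (x : X) :
    letter x ++ v ∈ altS (lettersS X) Z := by
  set Y := lettersS X with hYdef
  have hY : Y ⊆ Rset X false false := lettersS_Rset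
  have hbrR : brS Z ⊆ Rset X true true := brS_Rset hZ
  have h1 : ∀ n, powS (catS Y (brS Z)) n ⊆ Rset X false true :=
    powS_Rset (catS_Rset hY hbrR (by simp)) (by simp)
  have hsb : startsBr v := hvt.startsBr_iff.2 rfl
  rcases hv with ((h | (h | h)) | h) | (h | h)
  · -- family 1 : starts with a letter, contradiction
    obtain ⟨n, hn⟩ := Set.mem_iUnion.1 h
    have := (h1 n hn).startsBr_iff.1 hsb
    simp at this
  · exact absurd ((hY h).startsBr_iff.1 hsb) (by simp)
  · obtain ⟨n, hn⟩ := Set.mem_iUnion.1 h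
    have := ((catS_Rset (h1 n) hY (by simp)) hn).startsBr_iff.1 hsb
    simp at this
  · -- family 3 : v ∈ (⌊Z⌋Y)^{r+1}
    obtain ⟨r, hr⟩ := Set.mem_iUnion.1 h
    have : letter x ++ v ∈ catS Y (powS (catS (brS Z) Y) r) :=
      mem_catS (letter_mem_lettersS x) hr
    rw [catS_powS_swap] at this
    exact Or.inl (Or.inl (Or.inr (Or.inr (Set.mem_iUnion.2 ⟨r, this⟩))))
  · -- v ∈ ⌊Z⌋
    have : letter x ++ v ∈ catS Y (brS Z) := mem_catS (letter_mem_lettersS x) h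
    exact Or.inl (Or.inl (Or.inl (Set.mem_iUnion.2 ⟨0, this⟩)))
  · -- v ∈ (⌊Z⌋Y)^{r+1} ⌊Z⌋
    obtain ⟨r, hr⟩ := Set.mem_iUnion.1 h
    have h0 : letter x ++ v ∈ catS Y (catS (powS (catS (brS Z) Y) r) (brS Z)) :=
      mem_catS (letter_mem_lettersS x) hr
    rw [← catS_assoc, catS_powS_swap, catS_assoc, powS_succ_right] at h0
    exact Or.inl (Or.inl (Or.inl (Set.mem_iUnion.2 ⟨r + 1, h0⟩)))

/-- Prepending a bracketed word to an `altS` element starting with a letter. -/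
lemma prepend_bracket_altS {Z : Set (List (X ⊕ Bool))} (hZ : Z ⊆ RAll X)
    {v : List (X ⊕ Bool)} (hv : v ∈ altS (lettersS X) Z) {t : Bool}
    (hvt : RBW false t v) {z : List (X ⊕ Bool)} (hz : z ∈ Z) :
    bracket z ++ v ∈ altS (lettersS X) Z := by
  set Y := lettersS X with hYdef
  have hY : Y ⊆ Rset X false false := lettersS_Rset
  have hbrR : brS Z ⊆ Rset X true true := brS_Rset hZ
  have h2 : ∀ n, powS (catS (brS Z) Y) n ⊆ Rset X true false :=
    powS_Rset (catS_Rset hbrR hY (by simp)) (by simp)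
  have hzbr : bracket z ∈ brS Z := ⟨z, hz, rfl⟩
  have hsb : ¬ startsBr v := fun hs => by simpa using hvt.startsBr_iff.1 hs
  rcases hv with ((h | (h | h)) | h) | (h | h)
  · -- family 1
    obtain ⟨r, hr⟩ := Set.mem_iUnion.1 h
    have h0 : bracket z ++ v ∈ catS (brS Z) (powS (catS Y (brS Z)) r) :=
      mem_catS hzbr hr
    rw [catS_powS_swap] at h0
    exact Or.inr (Or.inr (Set.mem_iUnion.2 ⟨r, h0⟩))
  · -- v a letter
    have h0 : bracket z ++ v ∈ catS (brS Z) Y := mem_catS hzbr h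
    exact Or.inl (Or.inr (Set.mem_iUnion.2 ⟨0, h0⟩))
  · -- v ∈ (Y⌊Z⌋)^r Y
    obtain ⟨r, hr⟩ := Set.mem_iUnion.1 h
    have h0 : bracket z ++ v ∈ catS (brS Z) (catS (powS (catS Y (brS Z)) r) Y) :=
      mem_catS hzbr hr
    rw [← catS_assoc, catS_powS_swap, catS_assoc, powS_succ_right] at h0
    exact Or.inl (Or.inr (Set.mem_iUnion.2 ⟨r + 1, h0⟩))
  · obtain ⟨r, hr⟩ := Set.mem_iUnion.1 h
    exact absurd ((h2 r hr).startsBr_iff.2 rfl) hsb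
  · exact absurd ((hbrR h).startsBr_iff.2 rfl) hsb
  · obtain ⟨r, hr⟩ := Set.mem_iUnion.1 h
    exact absurd (((catS_Rset (h2 r) hbrR (by simp)) hr).startsBr_iff.2 rfl) hsb

lemma RBW.mem_frakX {h t : Bool} {w : List (X ⊕ Bool)} (hw : RBW h t w) :
    ∃ n, w ∈ frakX X n := by
  induction hw with
  | letter x => exact ⟨0, x, rfl⟩
  | @bracket u h t hu ih =>
      obtain ⟨n, hn⟩ := ih
      exact ⟨n + 1, brS_subset_altS _ _ ⟨u, hn, rfl⟩⟩
  | @consL x t v hv ih =>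
      obtain ⟨n, hn⟩ := ih
      match n, hn with
      | 0, hn =>
          obtain ⟨y, hy⟩ := hn
          rw [← hy] at hv
          have := hv.startsBr_iff.2 rfl
          simp [startsBr, _root_.letter, lb] at this
      | (m + 1), hn =>
          exact ⟨m + 1, prepend_letter_altS (frakX_subset_RAll m) hn hv x⟩
  | @consB u h t t' v hu hv ihu ihv =>
      obtain ⟨m, hm⟩ := ihu
      obtain ⟨n, hn⟩ := ihv
      refine ⟨max m n + 1, ?_⟩
      have hu' : u ∈ frakX X (max m n) := frakX_le X (le_max_left m n) hm
      have hv' : v ∈ frakX X (max m n + 1) :=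
        frakX_le X (Nat.succ_le_succ (le_max_right m n)) (frakX_mono X n hn)
      exact prepend_bracket_altS (frakX_subset_RAll _) hv' hv hu'

lemma RBW.mem_frakXinf {h t : Bool} {w : List (X ⊕ Bool)} (hw : RBW h t w) :
    w ∈ frakXinf X := by
  obtain ⟨n, hn⟩ := hw.mem_frakX
  exact Set.mem_iUnion.2 ⟨n, hn⟩

lemma mem_frakXinf_iff {w : List (X ⊕ Bool)} :
    w ∈ frakXinf X ↔ ∃ h t, RBW h t w := by
  constructor
  · exact fun hw => frakXinf_subset_RAll hw
  · rintro ⟨h, t, hw⟩; exact hw.mem_frakXinf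

end Closure

section LinearAux

variable {X : Type*} {k : Type*} [CommRing k]

lemma lmap_sw (f : List (X ⊕ Bool) → List (X ⊕ Bool)) (w : List (X ⊕ Bool)) :
    Finsupp.lmapDomain k k f (sw k w) = sw k (f w) := by
  simp [sw, Finsupp.lmapDomain, Finsupp.mapDomain_single]

lemma brL_sw (w : List (X ⊕ Bool)) : brL k (sw k w) = sw k (bracket w) := lmap_sw _ w

lemma lcat_sw (p w : List (X ⊕ Bool)) : lcat k p (sw k w) = sw k (p ++ w) := lmap_sw _ w

lemma rcat_sw (p w : List (X ⊕ Bool)) : rcat k p (sw k w) = sw k (w ++ p) := lmap_sw _ w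

lemma mem_span_map {A B : Set (List (X ⊕ Bool))}
    (g : (List (X ⊕ Bool) →₀ k) →ₗ[k] (List (X ⊕ Bool) →₀ k))
    (hg : ∀ w ∈ A, g (sw k w) ∈ Submodule.span k (sw k '' B))
    {m : List (X ⊕ Bool) →₀ k} (hm : m ∈ Submodule.span k (sw k '' A)) :
    g m ∈ Submodule.span k (sw k '' B) := by
  induction hm using Submodule.span_induction with
  | mem x hx => obtain ⟨w, hw, rfl⟩ := hx; exact hg w hw
  | zero => simp
  | add x y hx hy ihx ihy => rw [map_add]; exact Submodule.add_mem _ ihx ihy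
  | smul a x hx ihx => rw [map_smul]; exact Submodule.smul_mem _ a ihx

lemma eq_on_span {A : Set (List (X ⊕ Bool))}
    (g₁ g₂ : (List (X ⊕ Bool) →₀ k) →ₗ[k] (List (X ⊕ Bool) →₀ k))
    (hg : ∀ w ∈ A, g₁ (sw k w) = g₂ (sw k w))
    {m : List (X ⊕ Bool) →₀ k} (hm : m ∈ Submodule.span k (sw k '' A)) :
    g₁ m = g₂ m := by
  induction hm using Submodule.span_induction with
  | mem x hx => obtain ⟨w, hw, rfl⟩ := hx; exact hg w hw
  | zero => simp
  | add x y hx hy ihx ihy => rw [map_add, map_add, ihx, ihy]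
  | smul a x hx ihx => rw [map_smul, map_smul, ihx]

/-- The concatenation product as a bilinear map. -/
noncomputable def conc (k : Type*) [CommRing k] {X : Type*} :
    (List (X ⊕ Bool) →₀ k) →ₗ[k] (List (X ⊕ Bool) →₀ k) →ₗ[k] (List (X ⊕ Bool) →₀ k) :=
  Finsupp.lsum k fun p => LinearMap.toSpanSingleton k _ (lcat k p)

lemma conc_sw_left (p : List (X ⊕ Bool)) (m : List (X ⊕ Bool) →₀ k) :
    conc k (sw k p) m = lcat k p m := by
  simp [conc, sw, LinearMap.toSpanSingleton]

lemma conc_sw_right (q : List (X ⊕ Bool)) (m : List (X ⊕ Bool) →₀ k) :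
    conc k m (sw k q) = rcat k q m := by
  have : (conc k).flip (sw k (X := X) q) = rcat k q := by
    apply Finsupp.lhom_ext
    intro p c
    have : (Finsupp.single p c : List (X ⊕ Bool) →₀ k) = c • sw k p := by
      simp [sw, Finsupp.smul_single]
    rw [this, map_smul, map_smul]
    simp only [LinearMap.smul_apply, LinearMap.flip_apply]
    rw [conc_sw_left, lcat_sw, rcat_sw]
  exact DFunLike.congr_fun this m

end LinearAux

section Main

variable {k X B : Type*} [CommRing k]
    [NonUnitalRing B] [Module k B] [SMulCommClass k B B] [IsScalarTower k B B]

/-- The span of the Rota-Baxter words of head type `h` and tail type `t`. -/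
noncomputable abbrev Sp (k : Type*) [CommRing k] (X : Type*) (h t : Bool) :
    Submodule k (List (X ⊕ Bool) →₀ k) :=
  Submodule.span k (sw k '' Rset X h t)

lemma constr_mem (bX : Module.Basis X k B) (b : B) :
    (bX.constr k fun x₀ : X => sw k (letter x₀)) b ∈ Sp k X false false := by
  have hb : b ∈ Submodule.span k (Set.range bX) := by
    rw [bX.span_eq]; exact Submodule.mem_top
  have h2 := Submodule.mem_map_of_mem (f := bX.constr k fun x₀ : X => sw k (letter x₀)) hb
  rw [Submodule.map_span] at h2
  refine Submodule.span_le.2 ?_ h2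
  rintro _ ⟨_, ⟨x₀, rfl⟩, rfl⟩
  rw [Module.Basis.constr_basis]
  exact Submodule.subset_span ⟨_, RBW.letter x₀, rfl⟩

lemma bracket_length (u : List (X ⊕ Bool)) : (bracket u).length = u.length + 2 := by
  simp [bracket]

variable (bX : Module.Basis X k B) (lam : k)
    (mul : (List (X ⊕ Bool) →₀ k) →ₗ[k] (List (X ⊕ Bool) →₀ k) →ₗ[k]
      (List (X ⊕ Bool) →₀ k))
    (hconcat : ∀ u ∈ frakXinf X, ∀ v ∈ frakXinf X, typeMismatch u v →
      mul (sw k u) (sw k v) = sw k (u ++ v))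
    (hXX : ∀ x x' : X,
      mul (sw k (letter x)) (sw k (letter x')) =
        (bX.constr k fun x₀ : X => sw k (letter x₀)) (bX x * bX x'))
    (hbr : ∀ u ∈ frakXinf X, ∀ v ∈ frakXinf X,
      mul (sw k (bracket u)) (sw k (bracket v)) =
        brL k (mul (sw k (bracket u)) (sw k v)) +
          brL k (mul (sw k u) (sw k (bracket v))) +
          lam • brL k (mul (sw k u) (sw k v)))
    (hsplitL : ∀ u ∈ frakXinf X, ∀ v ∈ frakXinf X, typeMismatch u v →
      ∀ w ∈ frakXinf X, mul (sw k (u ++ v)) (sw k w) = lcat k u (mul (sw k v) (sw k w)))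
    (hsplitR : ∀ u ∈ frakXinf X, ∀ v ∈ frakXinf X, typeMismatch u v →
      ∀ w ∈ frakXinf X, mul (sw k w) (sw k (u ++ v)) = rcat k v (mul (sw k w) (sw k u)))

include hconcat hXX hbr hsplitL hsplitR in
/-- The key support lemma: the product of two Rota-Baxter words lies in the
span of the Rota-Baxter words with head type of the first factor and tail
type of the second. -/
lemma mulMem : ∀ L : ℕ, ∀ u v : List (X ⊕ Bool), ∀ hu tu hv tv : Bool,
    RBW hu tu u → RBW hv tv v → u.length + v.length ≤ L →
    mul (sw k u) (sw k v) ∈ Sp k X hu tv := by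
  intro L
  induction L using Nat.strong_induction_on with
  | _ L IH =>
    intro u v hu tu hv tv h1 h2 hlen
    cases h1 with
    | letter x =>
      cases h2 with
      | letter y =>
          show mul (sw k (letter x)) (sw k (letter y)) ∈ Sp k X false false
          rw [hXX x y]
          exact constr_mem bX _
      | @bracket t0 h0 t0' ht0 =>
          rw [hconcat _ (RBW.letter x).mem_frakXinf _ ht0.bracket.mem_frakXinf
            (((RBW.letter x).mismatch_iff ht0.bracket).2 (by simp))]
          exact Submodule.subset_span
            ⟨_, (RBW.letter x).append ht0.bracket (by simp), rfl⟩
      | @consL y tv' v' hv' =>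
          have e : (Sum.inl y :: v' : List (X ⊕ Bool)) = letter y ++ v' := rfl
          have elx : (sw k [Sum.inl x] : List (X ⊕ Bool) →₀ k) = sw k (letter x) := rfl
          rw [elx, e, hsplitR (letter y) (RBW.letter y).mem_frakXinf v' hv'.mem_frakXinf
            (((RBW.letter y).mismatch_iff hv').2 (by simp))
            (letter x) (RBW.letter x).mem_frakXinf]
          have hlt : (letter x).length + (letter y).length < L := by
            have := List.length_pos_iff.2 hv'.ne_nil
            simp [letter] at hlen ⊢
            omega
          refine mem_span_map (rcat k v') ?_
            (IH _ hlt _ _ _ _ _ _ (RBW.letter x) (RBW.letter y) le_rfl)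
          intro w hw
          rw [rcat_sw]
          exact Submodule.subset_span ⟨_, RBW.append hw hv' (by simp), rfl⟩
      | @consB t0 h0 t0' tv' v' ht0 hv' =>
          rw [hconcat _ (RBW.letter x).mem_frakXinf _ (ht0.consB hv').mem_frakXinf
            (((RBW.letter x).mismatch_iff (ht0.consB hv')).2 (by simp))]
          exact Submodule.subset_span
            ⟨_, (RBW.letter x).append (ht0.consB hv') (by simp), rfl⟩
    | @bracket s hs0 ts0 hs =>
      cases h2 with
      | letter y =>
          rw [hconcat _ hs.bracket.mem_frakXinf _ (RBW.letter y).mem_frakXinf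
            ((hs.bracket.mismatch_iff (RBW.letter y)).2 (by simp))]
          exact Submodule.subset_span
            ⟨_, hs.bracket.append (RBW.letter y) (by simp), rfl⟩
      | @bracket t0 ht0' tt0 ht0 =>
          rw [hbr s hs.mem_frakXinf t0 ht0.mem_frakXinf]
          refine Submodule.add_mem _ (Submodule.add_mem _ ?_ ?_)
            (Submodule.smul_mem _ _ ?_)
          · refine mem_span_map (brL k) ?_
              (IH ((bracket s).length + t0.length)
                (by have e1 := bracket_length (X := X) s
                    have e2 := bracket_length (X := X) t0; omega)
                _ _ _ _ _ _ hs.bracket ht0 le_rfl)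
            intro w hw
            rw [brL_sw]
            exact Submodule.subset_span ⟨_, hw.bracket, rfl⟩
          · refine mem_span_map (brL k) ?_
              (IH (s.length + (bracket t0).length)
                (by have e1 := bracket_length (X := X) s
                    have e2 := bracket_length (X := X) t0; omega)
                _ _ _ _ _ _ hs ht0.bracket le_rfl)
            intro w hw
            rw [brL_sw]
            exact Submodule.subset_span ⟨_, hw.bracket, rfl⟩
          · refine mem_span_map (brL k) ?_
              (IH (s.length + t0.length)
                (by have e1 := bracket_length (X := X) s
                    have e2 := bracket_length (X := X) t0; omega)
                _ _ _ _ _ _ hs ht0 le_rfl)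
            intro w hw
            rw [brL_sw]
            exact Submodule.subset_span ⟨_, hw.bracket, rfl⟩
      | @consL y tv' v' hv' =>
          rw [hconcat _ hs.bracket.mem_frakXinf _ (RBW.consL y hv').mem_frakXinf
            ((hs.bracket.mismatch_iff (RBW.consL y hv')).2 (by simp))]
          exact Submodule.subset_span
            ⟨_, hs.bracket.append (RBW.consL y hv') (by simp), rfl⟩
      | @consB t0 h0 t0' tv' v' ht0 hv' =>
          rw [hsplitR (bracket t0) ht0.bracket.mem_frakXinf v' hv'.mem_frakXinf
            ((ht0.bracket.mismatch_iff hv').2 (by simp))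
            (bracket s) hs.bracket.mem_frakXinf]
          have hlt : (bracket s).length + (bracket t0).length < L := by
            have := List.length_pos_iff.2 hv'.ne_nil
            rw [List.length_append] at hlen
            omega
          refine mem_span_map (rcat k v') ?_
            (IH _ hlt _ _ _ _ _ _ hs.bracket ht0.bracket le_rfl)
          intro w hw
          rw [rcat_sw]
          exact Submodule.subset_span ⟨_, RBW.append hw hv' (by simp), rfl⟩
    | @consL x tu' u' hu' =>
        have e : (Sum.inl x :: u' : List (X ⊕ Bool)) = letter x ++ u' := rfl
        rw [e, hsplitL (letter x) (RBW.letter x).mem_frakXinf u' hu'.mem_frakXinf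
          (((RBW.letter x).mismatch_iff hu').2 (by simp)) v h2.mem_frakXinf]
        have hlt : u'.length + v.length < L := by
          simp [letter] at hlen ⊢; omega
        refine mem_span_map (lcat k (letter x)) ?_
          (IH _ hlt _ _ _ _ _ _ hu' h2 le_rfl)
        intro w hw
        rw [lcat_sw]
        exact Submodule.subset_span ⟨_, (RBW.letter x).append hw (by simp), rfl⟩
    | @consB s hs0 ts0 tu' u' hs hu' =>
        rw [hsplitL (bracket s) hs.bracket.mem_frakXinf u' hu'.mem_frakXinf
          ((hs.bracket.mismatch_iff hu').2 (by simp)) v h2.mem_frakXinf]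
        have hlt : u'.length + v.length < L := by
          rw [List.length_append, bracket_length] at hlen; omega
        refine mem_span_map (lcat k (bracket s)) ?_
          (IH _ hlt _ _ _ _ _ _ hu' h2 le_rfl)
        intro w hw
        rw [lcat_sw]
        exact Submodule.subset_span ⟨_, hs.bracket.append hw (by simp), rfl⟩


/-- All Rota-Baxter words span. -/
noncomputable abbrev SpAll (k : Type*) [CommRing k] (X : Type*) :
    Submodule k (List (X ⊕ Bool) →₀ k) :=
  Submodule.span k (sw k '' RAll X)

lemma Sp_le_SpAll (h t : Bool) : Sp k X h t ≤ SpAll k X :=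
  Submodule.span_mono (Set.image_mono (Rset_subset_RAll h t))

include hsplitL in
lemma lcat_mul {a w : List (X ⊕ Bool)} {hA tA hW tW hP tP : Bool}
    (ha : RBW hA tA a) (hw : RBW hW tW w) (hmm : tA ≠ hP)
    {m : List (X ⊕ Bool) →₀ k} (hm : m ∈ Sp k X hP tP) :
    mul (lcat k a m) (sw k w) = lcat k a (mul m (sw k w)) := by
  have h := eq_on_span ((mul.flip (sw k w)) ∘ₗ (lcat k a))
    ((lcat k a) ∘ₗ (mul.flip (sw k w))) ?_ hm
  · simpa using h
  · intro p hp
    simp only [LinearMap.comp_apply, LinearMap.flip_apply, lcat_sw]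
    exact hsplitL a ha.mem_frakXinf p hp.mem_frakXinf
      ((ha.mismatch_iff hp).2 hmm) w hw.mem_frakXinf

include hsplitL in
lemma mul_concat_left {a u' : List (X ⊕ Bool)} {hA tA hU tU hP tP : Bool}
    (ha : RBW hA tA a) (hu' : RBW hU tU u') (hmm : tA ≠ hU)
    {m : List (X ⊕ Bool) →₀ k} (hm : m ∈ Sp k X hP tP) :
    mul (sw k (a ++ u')) m = lcat k a (mul (sw k u') m) := by
  have h := eq_on_span (mul (sw k (a ++ u')))
    ((lcat k a) ∘ₗ (mul (sw k u'))) ?_ hm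
  · simpa using h
  · intro q hq
    simp only [LinearMap.comp_apply]
    exact hsplitL a ha.mem_frakXinf u' hu'.mem_frakXinf
      ((ha.mismatch_iff hu').2 hmm) q hq.mem_frakXinf

include hsplitR in
lemma mul_concat_right {b w' : List (X ⊕ Bool)} {hB tB hW tW hP tP : Bool}
    (hb : RBW hB tB b) (hw' : RBW hW tW w') (hmm : tB ≠ hW)
    {m : List (X ⊕ Bool) →₀ k} (hm : m ∈ Sp k X hP tP) :
    mul m (sw k (b ++ w')) = rcat k w' (mul m (sw k b)) := by
  have h := eq_on_span (mul.flip (sw k (b ++ w')))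
    ((rcat k w') ∘ₗ (mul.flip (sw k b))) ?_ hm
  · simpa using h
  · intro p hp
    simp only [LinearMap.comp_apply, LinearMap.flip_apply]
    exact hsplitR b hb.mem_frakXinf w' hw'.mem_frakXinf
      ((hb.mismatch_iff hw').2 hmm) p hp.mem_frakXinf

include hsplitR in
lemma rcat_mul {b u : List (X ⊕ Bool)} {hB tB hU tU hP tP : Bool}
    (hb : RBW hB tB b) (hu : RBW hU tU u) (hmm : tP ≠ hB)
    {m : List (X ⊕ Bool) →₀ k} (hm : m ∈ Sp k X hP tP) :
    mul (sw k u) (rcat k b m) = rcat k b (mul (sw k u) m) := by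
  have h := eq_on_span ((mul (sw k u)) ∘ₗ (rcat k b))
    ((rcat k b) ∘ₗ (mul (sw k u))) ?_ hm
  · simpa using h
  · intro p hp
    simp only [LinearMap.comp_apply, rcat_sw]
    exact hsplitR p hp.mem_frakXinf b hb.mem_frakXinf
      ((hp.mismatch_iff hb).2 hmm) u hu.mem_frakXinf

include hsplitL in
lemma mul_rcat_left {v' w : List (X ⊕ Bool)} {hV tV hW tW hP tP : Bool}
    (hv' : RBW hV tV v') (hw : RBW hW tW w) (hmm : tP ≠ hV)
    {m : List (X ⊕ Bool) →₀ k} (hm : m ∈ Sp k X hP tP) :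
    mul (rcat k v' m) (sw k w) = conc k m (mul (sw k v') (sw k w)) := by
  have h := eq_on_span ((mul.flip (sw k w)) ∘ₗ (rcat k v'))
    ((conc k).flip (mul (sw k v') (sw k w))) ?_ hm
  · simpa using h
  · intro p hp
    simp only [LinearMap.comp_apply, LinearMap.flip_apply, rcat_sw, conc_sw_left]
    rw [hsplitL p hp.mem_frakXinf v' hv'.mem_frakXinf
      ((hp.mismatch_iff hv').2 hmm) w hw.mem_frakXinf]

include hsplitR in
lemma mul_lcat_right {u c : List (X ⊕ Bool)} {hU tU hC tC hP tP : Bool}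
    (hu : RBW hU tU u) (hc : RBW hC tC c) (hmm : tC ≠ hP)
    {m : List (X ⊕ Bool) →₀ k} (hm : m ∈ Sp k X hP tP) :
    mul (sw k u) (lcat k c m) = conc k (mul (sw k u) (sw k c)) m := by
  have h := eq_on_span ((mul (sw k u)) ∘ₗ (lcat k c))
    (conc k (mul (sw k u) (sw k c))) ?_ hm
  · simpa using h
  · intro q hq
    simp only [LinearMap.comp_apply, lcat_sw, conc_sw_right]
    exact hsplitR c hc.mem_frakXinf q hq.mem_frakXinf
      ((hc.mismatch_iff hq).2 hmm) u hu.mem_frakXinf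

include hbr in
lemma hbr_extL {r : List (X ⊕ Bool)} (hr : r ∈ frakXinf X)
    {m : List (X ⊕ Bool) →₀ k} (hm : m ∈ SpAll k X) :
    mul (brL k m) (sw k (bracket r)) =
      brL k (mul (brL k m) (sw k r)) + brL k (mul m (sw k (bracket r))) +
        lam • brL k (mul m (sw k r)) := by
  have h := eq_on_span ((mul.flip (sw k (bracket r))) ∘ₗ (brL k))
    ((brL k) ∘ₗ ((mul.flip (sw k r)) ∘ₗ (brL k)) + (brL k) ∘ₗ (mul.flip (sw k (bracket r)))
      + lam • ((brL k) ∘ₗ (mul.flip (sw k r)))) ?_ hm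
  · simpa using h
  · rintro p ⟨hp1, hp2, hp⟩
    simp only [LinearMap.add_apply, LinearMap.comp_apply, LinearMap.flip_apply,
      LinearMap.smul_apply, brL_sw]
    exact hbr p hp.mem_frakXinf r hr

include hbr in
lemma hbr_extR {s : List (X ⊕ Bool)} (hs : s ∈ frakXinf X)
    {m : List (X ⊕ Bool) →₀ k} (hm : m ∈ SpAll k X) :
    mul (sw k (bracket s)) (brL k m) =
      brL k (mul (sw k (bracket s)) m) + brL k (mul (sw k s) (brL k m)) +
        lam • brL k (mul (sw k s) m) := by
  have h := eq_on_span ((mul (sw k (bracket s))) ∘ₗ (brL k))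
    ((brL k) ∘ₗ (mul (sw k (bracket s))) + (brL k) ∘ₗ ((mul (sw k s)) ∘ₗ (brL k))
      + lam • ((brL k) ∘ₗ (mul (sw k s)))) ?_ hm
  · simpa using h
  · rintro q ⟨hq1, hq2, hq⟩
    simp only [LinearMap.add_apply, LinearMap.comp_apply, LinearMap.smul_apply, brL_sw]
    exact hbr s hs q hq.mem_frakXinf

include hXX in
lemma mulT_right (x z : X) (b : B) :
    mul ((bX.constr (M' := List (X ⊕ Bool) →₀ k) k fun x₀ : X => sw k (letter x₀)) b)
      (sw k (letter z)) =
    (bX.constr (M' := List (X ⊕ Bool) →₀ k) k fun x₀ : X => sw k (letter x₀)) (b * bX z) := by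
  have h : (mul.flip (sw k (letter z))) ∘ₗ (bX.constr k fun x₀ : X => sw k (letter x₀))
      = (bX.constr (M' := List (X ⊕ Bool) →₀ k) k fun x₀ : X => sw k (letter x₀))
          ∘ₗ (LinearMap.mulRight k (bX z)) := by
    apply bX.ext
    intro i
    simp only [LinearMap.comp_apply, LinearMap.flip_apply, Module.Basis.constr_basis,
      LinearMap.mulRight_apply]
    rw [hXX i z]
  have := DFunLike.congr_fun h b
  simpa using this

include hXX in
lemma mulT_left (x : X) (b : B) :
    mul (sw k (letter x))
      ((bX.constr (M' := List (X ⊕ Bool) →₀ k) k fun x₀ : X => sw k (letter x₀)) b) =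
    (bX.constr (M' := List (X ⊕ Bool) →₀ k) k fun x₀ : X => sw k (letter x₀)) (bX x * b) := by
  have h : (mul (sw k (letter x))) ∘ₗ (bX.constr k fun x₀ : X => sw k (letter x₀))
      = (bX.constr (M' := List (X ⊕ Bool) →₀ k) k fun x₀ : X => sw k (letter x₀))
          ∘ₗ (LinearMap.mulLeft k (bX x)) := by
    apply bX.ext
    intro i
    simp only [LinearMap.comp_apply, Module.Basis.constr_basis, LinearMap.mulLeft_apply]
    rw [hXX x i]
  have := DFunLike.congr_fun h b
  simpa using this


omit [NonUnitalRing B] [Module k B] [SMulCommClass k B B] [IsScalarTower k B B] in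
lemma RBW.b1_or_split {h t : Bool} {w : List (X ⊕ Bool)} (hw : RBW h t w) :
    ((∃ x : X, w = _root_.letter x ∧ h = false ∧ t = false) ∨
     (∃ s, (∃ hs ts, RBW hs ts s) ∧ w = _root_.bracket s ∧ h = true ∧ t = true)) ∨
    (∃ a u', (∃ hA tA hU, RBW hA tA a ∧ RBW hU t u' ∧ tA ≠ hU) ∧ w = a ++ u' ∧
      a ≠ [] ∧ u' ≠ []) := by
  cases hw with
  | letter x => exact Or.inl (Or.inl ⟨x, rfl, rfl, rfl⟩)
  | @bracket u hh tt hu => exact Or.inl (Or.inr ⟨u, ⟨hh, tt, hu⟩, rfl, rfl, rfl⟩)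
  | @consL x t v hv =>
      exact Or.inr ⟨_root_.letter x, v, ⟨false, false, true, RBW.letter x, hv, by simp⟩,
        rfl, by simp [_root_.letter], hv.ne_nil⟩
  | @consB u hh tt t' v hu hv =>
      exact Or.inr ⟨_root_.bracket u, v, ⟨true, true, false, hu.bracket, hv, by simp⟩,
        rfl, by simp [_root_.bracket], hv.ne_nil⟩

include hconcat hXX hbr hsplitL hsplitR in
/-- Associativity on Rota-Baxter words. -/
lemma mulAssocW : ∀ L : ℕ, ∀ u v w : List (X ⊕ Bool), ∀ hu tu hv tv hw tw : Bool,
    RBW hu tu u → RBW hv tv v → RBW hw tw w → u.length + v.length + w.length ≤ L →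
    mul (mul (sw k u) (sw k v)) (sw k w) = mul (sw k u) (mul (sw k v) (sw k w)) := by
  have MM := mulMem bX lam mul hconcat hXX hbr hsplitL hsplitR
  intro L
  induction L using Nat.strong_induction_on with
  | _ L IH =>
  intro u v w hu tu hv tv hw tw h1 h2 h3 hlen
  rcases h2.b1_or_split with hv2 | ⟨c, v', ⟨hC, tC, hV', hc, hv', hmmc⟩, rfl, hcne, hv'ne⟩
  swap
  ·
    -- Case C : the middle word splits as c ++ v'
    have muc := MM (u.length + c.length) u c _ _ _ _ h1 hc le_rfl
    have mv'w := MM (v'.length + w.length) v' w _ _ _ _ hv' h3 le_rfl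
    have hmism : typeMismatch c v' := (hc.mismatch_iff hv').2 hmmc
    rw [hsplitR c hc.mem_frakXinf v' hv'.mem_frakXinf hmism u h1.mem_frakXinf,
      hsplitL c hc.mem_frakXinf v' hv'.mem_frakXinf hmism w h3.mem_frakXinf,
      mul_rcat_left mul hsplitL hv' h3 hmmc muc,
      mul_lcat_right mul hsplitR h1 hc hmmc mv'w]
  rcases h1.b1_or_split with hu1 | ⟨a, u', ⟨hA, tA, hU, ha, hu', hmma⟩, rfl, hane, hu'ne⟩
  swap
  ·
    -- Case A : the first word splits as a ++ u'
    have mu'v := MM (u'.length + v.length) u' v _ _ _ _ hu' h2 le_rfl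
    have mvw := MM (v.length + w.length) v w _ _ _ _ h2 h3 le_rfl
    rw [hsplitL a ha.mem_frakXinf u' hu'.mem_frakXinf
        ((ha.mismatch_iff hu').2 hmma) v h2.mem_frakXinf,
      lcat_mul mul hsplitL ha h3 hmma mu'v,
      mul_concat_left mul hsplitL ha hu' hmma mvw]
    refine congrArg _ (IH (u'.length + v.length + w.length) ?_ u' v w
      _ _ _ _ _ _ hu' h2 h3 le_rfl)
    have : 0 < a.length := List.length_pos_iff.2 hane
    rw [List.length_append] at hlen
    omega
  rcases h3.b1_or_split with hw3 | ⟨b, w', ⟨hB, tB, hW, hb, hw', hmmb⟩, rfl, hbne, hw'ne⟩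
  swap
  ·
    -- Case B : the third word splits as b ++ w'
    have muv := MM (u.length + v.length) u v _ _ _ _ h1 h2 le_rfl
    have mvb := MM (v.length + b.length) v b _ _ _ _ h2 hb le_rfl
    rw [mul_concat_right mul hsplitR hb hw' hmmb muv,
      hsplitR b hb.mem_frakXinf w' hw'.mem_frakXinf
        ((hb.mismatch_iff hw').2 hmmb) v h2.mem_frakXinf,
      rcat_mul mul hsplitR hw' h1 hmmb mvb]
    refine congrArg _ (IH (u.length + v.length + b.length) ?_ u v b
      _ _ _ _ _ _ h1 h2 hb le_rfl)
    have : 0 < w'.length := List.length_pos_iff.2 hw'ne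
    rw [List.length_append] at hlen
    omega
  -- all three words have breadth one
  by_cases c1 : tu = hv
  case neg =>
    -- P1 : mismatch at the first junction
    have mvw := MM (v.length + w.length) v w _ _ _ _ h2 h3 le_rfl
    rw [hconcat u h1.mem_frakXinf v h2.mem_frakXinf ((h1.mismatch_iff h2).2 c1),
      hsplitL u h1.mem_frakXinf v h2.mem_frakXinf ((h1.mismatch_iff h2).2 c1)
        w h3.mem_frakXinf]
    have he := eq_on_span (mul (sw k u)) (lcat k u) ?_ mvw
    · rw [he]
    · intro q hq
      rw [lcat_sw]
      exact hconcat u h1.mem_frakXinf q hq.mem_frakXinf ((h1.mismatch_iff hq).2 c1)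
  by_cases c2 : tv = hw
  case neg =>
    -- P2 : mismatch at the second junction
    have muv := MM (u.length + v.length) u v _ _ _ _ h1 h2 le_rfl
    rw [hconcat v h2.mem_frakXinf w h3.mem_frakXinf ((h2.mismatch_iff h3).2 c2),
      hsplitR v h2.mem_frakXinf w h3.mem_frakXinf ((h2.mismatch_iff h3).2 c2)
        u h1.mem_frakXinf]
    have he := eq_on_span (mul.flip (sw k w)) (rcat k w) ?_ muv
    · simpa using he
    · intro p hp
      simp only [LinearMap.flip_apply, rcat_sw]
      exact hconcat p hp.mem_frakXinf w h3.mem_frakXinf ((hp.mismatch_iff h3).2 c2)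
  -- matched junctions
  rcases hv2 with ⟨y, rfl, hvh, hvt⟩ | ⟨t0, ⟨ht0h, tt0t, ht0R⟩, rfl, hvh, hvt⟩
  · -- the middle word is a letter
    rcases hu1 with ⟨x, rfl, huh, hut⟩ | ⟨s, ⟨hs0, ts0, hsR⟩, rfl, huh, hut⟩
    swap
    · simp [hut, hvh] at c1
    rcases hw3 with ⟨z, rfl, hwh, hwt⟩ | ⟨r, ⟨hr0, tr0, hrR⟩, rfl, hwh, hwt⟩
    swap
    · simp [hvt, hwh] at c2
    -- iv-a : all letters
    rw [hXX x y, hXX y z, mulT_right bX mul hXX x z (bX x * bX y),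
      mulT_left bX mul hXX x (bX y * bX z), mul_assoc]
  · -- the middle word is a bracket
    rcases hu1 with ⟨x, rfl, huh, hut⟩ | ⟨s, ⟨hs0, ts0, hsR⟩, rfl, huh, hut⟩
    · simp [hut, hvh] at c1
    rcases hw3 with ⟨z, rfl, hwh, hwt⟩ | ⟨r, ⟨hr0, tr0, hrR⟩, rfl, hwh, hwt⟩
    · simp [hvt, hwh] at c2
    -- iv-b : all brackets
    have hsm := hsR.mem_frakXinf
    have htm := ht0R.mem_frakXinf
    have hrm := hrR.mem_frakXinf
    have e1l := bracket_length (X := X) s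
    have e2l := bracket_length (X := X) t0
    have e3l := bracket_length (X := X) r
    have A1mem : mul (sw k (bracket s)) (sw k t0) ∈ SpAll k X :=
      Sp_le_SpAll _ _ (MM _ _ _ _ _ _ _ hsR.bracket ht0R le_rfl)
    have A2mem : mul (sw k s) (sw k (bracket t0)) ∈ SpAll k X :=
      Sp_le_SpAll _ _ (MM _ _ _ _ _ _ _ hsR ht0R.bracket le_rfl)
    have A3mem : mul (sw k s) (sw k t0) ∈ SpAll k X :=
      Sp_le_SpAll _ _ (MM _ _ _ _ _ _ _ hsR ht0R le_rfl)
    have B1mem : mul (sw k (bracket t0)) (sw k r) ∈ SpAll k X :=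
      Sp_le_SpAll _ _ (MM _ _ _ _ _ _ _ ht0R.bracket hrR le_rfl)
    have B2mem : mul (sw k t0) (sw k (bracket r)) ∈ SpAll k X :=
      Sp_le_SpAll _ _ (MM _ _ _ _ _ _ _ ht0R hrR.bracket le_rfl)
    have B3mem : mul (sw k t0) (sw k r) ∈ SpAll k X :=
      Sp_le_SpAll _ _ (MM _ _ _ _ _ _ _ ht0R hrR le_rfl)
    have I1 := IH ((bracket s).length + (bracket t0).length + r.length) (by omega)
      _ _ _ _ _ _ _ _ _ hsR.bracket ht0R.bracket hrR le_rfl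
    have I2 := IH ((bracket s).length + t0.length + (bracket r).length) (by omega)
      _ _ _ _ _ _ _ _ _ hsR.bracket ht0R hrR.bracket le_rfl
    have I3 := IH (s.length + (bracket t0).length + (bracket r).length) (by omega)
      _ _ _ _ _ _ _ _ _ hsR ht0R.bracket hrR.bracket le_rfl
    have I4 := IH (s.length + t0.length + (bracket r).length) (by omega)
      _ _ _ _ _ _ _ _ _ hsR ht0R hrR.bracket le_rfl
    have I5 := IH ((bracket s).length + t0.length + r.length) (by omega)
      _ _ _ _ _ _ _ _ _ hsR.bracket ht0R hrR le_rfl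
    have I6 := IH (s.length + (bracket t0).length + r.length) (by omega)
      _ _ _ _ _ _ _ _ _ hsR ht0R.bracket hrR le_rfl
    have I7 := IH (s.length + t0.length + r.length) (by omega)
      _ _ _ _ _ _ _ _ _ hsR ht0R hrR le_rfl
    have e0 := hbr s hsm t0 htm
    have e0' := hbr t0 htm r hrm
    have hkey : mul (sw k (bracket s)) (mul (sw k (bracket t0)) (sw k r)) =
        mul (brL k (mul (sw k (bracket s)) (sw k t0))) (sw k r)
          + mul (brL k (mul (sw k s) (sw k (bracket t0)))) (sw k r)
          + lam • mul (brL k (mul (sw k s) (sw k t0))) (sw k r) := by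
      rw [← I1]
      have h := congrArg (fun m => mul m (sw k r)) e0
      simp only [map_add, map_smul, LinearMap.add_apply, LinearMap.smul_apply] at h
      exact h
    have hkey2 : mul (mul (sw k s) (sw k (bracket t0))) (sw k (bracket r)) =
        mul (sw k s) (brL k (mul (sw k (bracket t0)) (sw k r)))
          + mul (sw k s) (brL k (mul (sw k t0) (sw k (bracket r))))
          + lam • mul (sw k s) (brL k (mul (sw k t0) (sw k r))) := by
      rw [I3, e0']
      simp only [map_add, map_smul]
    rw [e0, e0']
    simp only [map_add, map_smul, LinearMap.add_apply, LinearMap.smul_apply]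
    rw [hbr_extL lam mul hbr hrm A1mem, hbr_extL lam mul hbr hrm A2mem,
      hbr_extL lam mul hbr hrm A3mem, hbr_extR lam mul hbr hsm B1mem,
      hbr_extR lam mul hbr hsm B2mem, hbr_extR lam mul hbr hsm B3mem]
    rw [hkey2, I2, I4, I5, I6, I7, hkey]
    simp only [map_add, map_smul, smul_add, smul_smul]
    module

end Main

/-- Let `B` be a nonunitary `k`-algebra with `k`-basis `X`, and let
`Ш⁰(B)` be (the span of the Rota-Baxter words inside) the free `k`-module
on words, equipped with a bilinear product `⋄` (`mul`) satisfying the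
recursive defining clauses: concatenation when tail and head types differ,
multiplication in `B` on `X·X`, the bracket clause
`⌊u⌋⋄⌊v⌋ = ⌊⌊u⌋⋄v⌋ + ⌊u⋄⌊v⌋⌋ + λ⌊u⋄v⌋`, and compatibility with standard
decompositions. Then `(Ш⁰(B), ⋄)` is an associative (nonunitary) `k`-algebra. -/
theorem stmt_11 {k X B : Type*} [CommRing k]
    [NonUnitalRing B] [Module k B] [SMulCommClass k B B] [IsScalarTower k B B]
    (bX : Module.Basis X k B) (lam : k)
    (mul : (List (X ⊕ Bool) →₀ k) →ₗ[k] (List (X ⊕ Bool) →₀ k) →ₗ[k]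
      (List (X ⊕ Bool) →₀ k))
    (hconcat : ∀ u ∈ frakXinf X, ∀ v ∈ frakXinf X, typeMismatch u v →
      mul (sw k u) (sw k v) = sw k (u ++ v))
    (hXX : ∀ x x' : X,
      mul (sw k (letter x)) (sw k (letter x')) =
        (bX.constr k fun x₀ : X => sw k (letter x₀)) (bX x * bX x'))
    (hbr : ∀ u ∈ frakXinf X, ∀ v ∈ frakXinf X,
      mul (sw k (bracket u)) (sw k (bracket v)) =
        brL k (mul (sw k (bracket u)) (sw k v)) +
          brL k (mul (sw k u) (sw k (bracket v))) +
          lam • brL k (mul (sw k u) (sw k v)))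
    (hsplitL : ∀ u ∈ frakXinf X, ∀ v ∈ frakXinf X, typeMismatch u v →
      ∀ w ∈ frakXinf X, mul (sw k (u ++ v)) (sw k w) = lcat k u (mul (sw k v) (sw k w)))
    (hsplitR : ∀ u ∈ frakXinf X, ∀ v ∈ frakXinf X, typeMismatch u v →
      ∀ w ∈ frakXinf X, mul (sw k w) (sw k (u ++ v)) = rcat k v (mul (sw k w) (sw k u))) :
    ∀ a ∈ Submodule.span k (sw k '' frakXinf X),
      ∀ b ∈ Submodule.span k (sw k '' frakXinf X),
        ∀ c ∈ Submodule.span k (sw k '' frakXinf X),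
          mul (mul a b) c = mul a (mul b c) := by
  have key : ∀ u ∈ frakXinf X, ∀ v ∈ frakXinf X, ∀ w ∈ frakXinf X,
      mul (mul (sw k u) (sw k v)) (sw k w) = mul (sw k u) (mul (sw k v) (sw k w)) := by
    intro u hu v hv w hw
    obtain ⟨hu1, tu1, hU⟩ := mem_frakXinf_iff.1 hu
    obtain ⟨hv1, tv1, hV⟩ := mem_frakXinf_iff.1 hv
    obtain ⟨hw1, tw1, hW⟩ := mem_frakXinf_iff.1 hw
    exact mulAssocW bX lam mul hconcat hXX hbr hsplitL hsplitR
      (u.length + v.length + w.length) u v w _ _ _ _ _ _ hU hV hW le_rfl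
  intro a ha b hb c hc
  induction hc using Submodule.span_induction with
  | mem z hz =>
    obtain ⟨w, hw, rfl⟩ := hz
    induction hb using Submodule.span_induction with
    | mem y hy =>
      obtain ⟨v, hv, rfl⟩ := hy
      induction ha using Submodule.span_induction with
      | mem x hx =>
        obtain ⟨u, hu, rfl⟩ := hx
        exact key u hu v hv w hw
      | zero => simp
      | add x y hx hy ihx ihy =>
          simp only [map_add, LinearMap.add_apply, ihx, ihy]
      | smul r x hx ihx =>
          simp only [map_smul, LinearMap.smul_apply, ihx]
    | zero => simp
    | add x y hx hy ihx ihy =>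
        simp only [map_add, LinearMap.add_apply, ihx, ihy]
    | smul r x hx ihx =>
        simp only [map_smul, LinearMap.smul_apply, ihx]
  | zero => simp
  | add x y hx hy ihx ihy =>
      simp only [map_add, LinearMap.add_apply, ihx, ihy]
  | smul r x hx ihx =>
      simp only [map_smul, LinearMap.smul_apply, ihx]
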